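/- Let Γ be a countably infinite group, let k, ℓ ≥ 1, and let π : Free(k^Γ) → ℓ^Γ be a continuous Γ-equivariant map. Then either π is constant and Stab(π) = Γ, or else Stab(π) is a finite normal subgroup of Γ. -/

import Mathlib

open scoped Pointwise
section ShiftDefs

variable {Γ : Type} [Group Γ] {A B : Type*}

/-- The Bernoulli shift action of `Γ`: `(γ · x)(δ) = x(δγ)`. -/
def shiftAct (γ : Γ) (x : Γ → A) : Γ → A := fun δ => x (δ * γ)

/-- The free part of the shift `Γ ↷ (Γ → A)`. -/
def freePart (Γ : Type) [Group Γ] (A : Type*) : Set (Γ → A) :=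
  {x | ∀ γ : Γ, shiftAct γ x = x → γ = 1}

/-- A subshift: a closed shift-invariant subset. -/
def IsSubshift [TopologicalSpace A] (S : Set (Γ → A)) : Prop :=
  IsClosed S ∧ ∀ γ : Γ, ∀ x ∈ S, shiftAct γ x ∈ S

/-- A subshift of finite type: `⋂ γ (γ · C)` for some clopen `C`. -/
def IsSFT [TopologicalSpace A] (S : Set (Γ → A)) : Prop :=
  ∃ C : Set (Γ → A), IsClopen C ∧ S = ⋂ γ : Γ, shiftAct γ ⁻¹' C

/-- The stabilizer of a point under the shift action. -/
def ptStab (x : Γ → A) : Set Γ := {γ | shiftAct γ x = x}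

/-- `Stab(π)`: elements fixing every point in the image of `π` (domain `dom`). -/
def mapStab (π : (Γ → A) → (Γ → B)) (dom : Set (Γ → A)) : Set Γ :=
  {γ | ∀ x ∈ dom, shiftAct γ (π x) = π x}

/-- `Γ`-equivariance of `π` on the set `dom`. -/
def EquivariantOn (π : (Γ → A) → (Γ → B)) (dom : Set (Γ → A)) : Prop :=
  ∀ x ∈ dom, ∀ γ : Γ, π (shiftAct γ x) = shiftAct γ (π x)

/-- `Col(F, ℓ)`: proper `ℓ`-colorings of the Cayley graph `G(Γ, F)`. -/
def properCol (F : Finset Γ) (ℓ : ℕ) : Set (Γ → Fin ℓ) :=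
  {x | ∀ γ : Γ, ∀ σ ∈ F, x γ ≠ x (σ * γ)}

end ShiftDefs

section Helpers

variable {Γ : Type} [Group Γ] {A : Type*}

lemma shiftAct_shiftAct (γ δ : Γ) (x : Γ → A) :
    shiftAct γ (shiftAct δ x) = shiftAct (γ * δ) x := by
  funext η; simp [shiftAct, mul_assoc]

lemma shiftAct_one (x : Γ → A) : shiftAct (1 : Γ) x = x := by
  funext η; simp [shiftAct]

lemma free_shift {x : Γ → A} (hx : x ∈ freePart Γ A) (γ : Γ) :
    shiftAct γ x ∈ freePart Γ A := by
  intro δ hδ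
  rw [shiftAct_shiftAct] at hδ
  have h : shiftAct (γ⁻¹ * (δ * γ)) x = x := by
    rw [← shiftAct_shiftAct, hδ, shiftAct_shiftAct, inv_mul_cancel, shiftAct_one]
  have h2 := hx _ h
  have h3 : δ * γ = γ := by
    have := congrArg (γ * ·) h2
    simpa [mul_assoc] using this
  exact mul_right_cancel (b := γ) (by rw [one_mul, h3])

lemma exists_fresh [Infinite Γ] (U : Finset Γ) (γ : Γ) : ∃ δ : Γ, δ ∉ U ∧ δ * γ ∉ U := by
  classical
  obtain ⟨δ, hδ⟩ := Infinite.exists_notMem_finset (U ∪ U.image (· * γ⁻¹))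
  refine ⟨δ, fun h => hδ (Finset.mem_union_left _ h), fun h => hδ ?_⟩
  exact Finset.mem_union_right _ (Finset.mem_image.2 ⟨δ * γ, h, by group⟩)


lemma free_dense [Countable Γ] [Infinite Γ] {k : ℕ} (hk : 2 ≤ k)
    (F : Finset Γ) (w : Γ → Fin k) :
    ∃ z ∈ freePart Γ (Fin k), ∀ δ ∈ F, z δ = w δ := by
  classical
  obtain ⟨e⟩ : Nonempty (ℕ ≃ Γ) := nonempty_equiv_of_countable
  let U : ℕ → Finset Γ := fun n => Nat.rec F
    (fun m Um => insert (Classical.choose (exists_fresh Um (e m)))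
      (insert (Classical.choose (exists_fresh Um (e m)) * e m) Um)) n
  let d : ℕ → Γ := fun n => Classical.choose (exists_fresh (U n) (e n))
  have hUs : ∀ n, U (n + 1) = insert (d n) (insert (d n * e n) (U n)) := fun n => rfl
  have hd1 : ∀ n, d n ∉ U n := fun n => (Classical.choose_spec (exists_fresh (U n) (e n))).1
  have hd2 : ∀ n, d n * e n ∉ U n := fun n => (Classical.choose_spec (exists_fresh (U n) (e n))).2
  have hmono : ∀ m n, m ≤ n → U m ⊆ U n := by
    intro m n h
    induction n, h using Nat.le_induction with
    | base => exact subset_rfl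
    | succ n hmn ih =>
        refine ih.trans ?_
        rw [hUs]
        exact (Finset.subset_insert _ _).trans (Finset.subset_insert _ _)
  have hF : ∀ n, F ⊆ U n := fun n => hmono 0 n (Nat.zero_le n)
  have hmemd : ∀ n, d n ∈ U (n + 1) := fun n => by rw [hUs]; exact Finset.mem_insert_self _ _
  have hmemde : ∀ n, d n * e n ∈ U (n + 1) := fun n => by
    rw [hUs]; exact Finset.mem_insert_of_mem (Finset.mem_insert_self _ _)
  let S : Set Γ := Set.range (fun n => d n * e n)
  let z : Γ → Fin k := fun δ =>
    if δ ∈ S then ⟨1, by omega⟩ else if δ ∈ F then w δ else ⟨0, by omega⟩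
  have hFS : ∀ δ ∈ F, δ ∉ S := by
    rintro δ hδ ⟨m, hm⟩
    dsimp only at hm
    exact hd2 m (by rw [hm]; exact hF m hδ)
  have hzF : ∀ δ ∈ F, z δ = w δ := by
    intro δ hδ
    simp only [z, if_neg (hFS δ hδ), if_pos hδ]
  refine ⟨z, ?_, hzF⟩
  intro γ hγeq
  by_contra hne
  set n := e.symm γ with hn
  have hen : e n = γ := e.apply_symm_apply γ
  have hdnS : d n ∉ S := by
    rintro ⟨m, hm⟩
    dsimp only at hm
    rcases lt_trichotomy m n with h | h | h
    · exact hd1 n (hmono (m + 1) n h (hm ▸ hmemde m))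
    · rw [h] at hm
      exact hne (by rw [← hen]; exact mul_left_cancel (a := d n) (by rw [hm, mul_one]))
    · exact hd2 m (by rw [hm]; exact hmono (n + 1) m h (hmemd n))
  have hdnF : d n ∉ F := fun h => hd1 n (hF n h)
  have hz0 : z (d n) = ⟨0, by omega⟩ := by
    simp only [z, if_neg hdnS, if_neg hdnF]
  have hz1 : z (d n * e n) = ⟨1, by omega⟩ := by
    simp only [z, if_pos (show d n * e n ∈ S from Set.mem_range_self (f := fun n => d n * e n) n)]
  have h1 : z (d n * γ) = z (d n) := congrFun hγeq (d n)
  rw [← hen, hz1, hz0] at h1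
  simp at h1

lemma cont_window {k ℓ : ℕ}
    (π : (Γ → Fin k) → (Γ → Fin ℓ)) (D : Set (Γ → Fin k))
    (hc : ContinuousOn π D) {x : Γ → Fin k} (hx : x ∈ D) :
    ∃ W : Finset Γ, ∀ z ∈ D, (∀ δ ∈ W, z δ = x δ) → π z 1 = π x 1 := by
  classical
  have h1 : ContinuousWithinAt (fun z => π z 1) D x :=
    ((continuous_apply (1 : Γ)).continuousAt).comp_continuousWithinAt (hc x hx)
  have h2 : {z : Γ → Fin k | π z 1 = π x 1} ∈ nhdsWithin x D := by
    have := h1 (IsOpen.mem_nhds (isOpen_discrete {π x 1}) rfl)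
    simpa [Set.preimage, Set.mem_singleton_iff] using this
  obtain ⟨u, hu_open, hxu, hsub⟩ := mem_nhdsWithin.1 h2
  have hu : u ∈ nhds x := hu_open.mem_nhds hxu
  rw [nhds_pi, Filter.mem_pi] at hu
  obtain ⟨I, hI, t, ht, hIt⟩ := hu
  refine ⟨hI.toFinset, fun z hz hagree => ?_⟩
  have hzu : z ∈ u := by
    apply hIt
    intro i hi
    rw [hagree i (hI.mem_toFinset.2 hi)]
    exact mem_of_mem_nhds (ht i)
  exact hsub ⟨hzu, hz⟩

end Helpers

/-- Proposition `Stab`.  Let `k, ℓ ≥ 1` and let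
`π : Free(k^Γ) → ℓ^Γ` be a continuous `Γ`-equivariant map.  Then either `π` is
constant and `Stab(π) = Γ`, or else `Stab(π)` is a finite normal subgroup of `Γ`. -/
theorem stmt2 {Γ : Type} [Group Γ] [Countable Γ] [Infinite Γ]
    (k ℓ : ℕ) (hk : 1 ≤ k) (hℓ : 1 ≤ ℓ)
    (π : (Γ → Fin k) → (Γ → Fin ℓ))
    (hπcont : ContinuousOn π (freePart Γ (Fin k)))
    (hπequiv : EquivariantOn π (freePart Γ (Fin k))) :
    ((∀ x ∈ freePart Γ (Fin k), ∀ y ∈ freePart Γ (Fin k), π x = π y) ∧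
      mapStab π (freePart Γ (Fin k)) = Set.univ) ∨
    (∃ H : Subgroup Γ, H.Normal ∧ (H : Set Γ).Finite ∧
      (H : Set Γ) = mapStab π (freePart Γ (Fin k))) := by
  classical
  by_cases hk2 : 2 ≤ k
  · by_cases hconst : ∀ x ∈ freePart Γ (Fin k), ∀ y ∈ freePart Γ (Fin k), π x = π y
    · left
      refine ⟨hconst, Set.eq_univ_of_forall fun γ => ?_⟩
      intro x hx
      rw [← hπequiv x hx γ]
      exact hconst _ (free_shift hx γ) _ hx
    · right
      refine ⟨{ carrier := mapStab π (freePart Γ (Fin k))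
                one_mem' := fun x _ => shiftAct_one (π x)
                mul_mem' := ?_
                inv_mem' := ?_ }, ?_, ?_, rfl⟩
      · intro a b ha hb x hx
        rw [← shiftAct_shiftAct, hb x hx, ha x hx]
      · intro a ha x hx
        have h := congrArg (shiftAct a⁻¹) (ha x hx)
        rw [shiftAct_shiftAct, inv_mul_cancel, shiftAct_one] at h
        exact h.symm
      · constructor
        intro a ha g x hx
        have hx' := free_shift hx g⁻¹
        calc shiftAct (g * a * g⁻¹) (π x)
            = shiftAct g (shiftAct a (shiftAct g⁻¹ (π x))) := by
              rw [shiftAct_shiftAct, shiftAct_shiftAct]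
          _ = shiftAct g (shiftAct a (π (shiftAct g⁻¹ x))) := by rw [hπequiv x hx g⁻¹]
          _ = shiftAct g (π (shiftAct g⁻¹ x)) := by rw [ha _ hx']
          _ = π (shiftAct g (shiftAct g⁻¹ x)) := (hπequiv _ hx' g).symm
          _ = π x := by rw [shiftAct_shiftAct, mul_inv_cancel, shiftAct_one]
      · by_contra hfin
        have hinf : (mapStab π (freePart Γ (Fin k))).Infinite := hfin
        apply hconst
        have key : ∀ x ∈ freePart Γ (Fin k), ∀ y ∈ freePart Γ (Fin k), π x 1 = π y 1 := by
          intro x hx y hy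
          obtain ⟨Wx, hWx⟩ := cont_window π _ hπcont hx
          obtain ⟨Wy, hWy⟩ := cont_window π _ hπcont hy
          obtain ⟨γ, hγH, hγB⟩ := hinf.exists_notMem_finset (Wy⁻¹ * Wx)
          obtain ⟨z, hzfree, hzF⟩ := free_dense hk2 (Wx ∪ Wy.image (· * γ))
            (fun δ => if δ ∈ Wx then x δ else y (δ * γ⁻¹))
          have e1 : π z 1 = π x 1 := by
            refine hWx z hzfree fun δ hδ => ?_
            rw [hzF δ (Finset.mem_union_left _ hδ)]
            simp only [if_pos hδ]
          have e2 : π (shiftAct γ z) 1 = π y 1 := by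
            refine hWy _ (free_shift hzfree γ) fun δ hδ => ?_
            have hmem : δ * γ ∈ Wx ∪ Wy.image (· * γ) :=
              Finset.mem_union_right _ (Finset.mem_image.2 ⟨δ, hδ, rfl⟩)
            have hnot : δ * γ ∉ Wx := by
              intro h
              exact hγB (Finset.mem_mul.2 ⟨δ⁻¹, Finset.inv_mem_inv hδ, δ * γ, h, by group⟩)
            show z (δ * γ) = y δ
            rw [hzF _ hmem]
            simp only [if_neg hnot, mul_inv_cancel_right]
          have e3 : π (shiftAct γ z) 1 = π z 1 := by
            rw [hπequiv z hzfree γ, hγH z hzfree]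
          rw [← e1, ← e3, e2]
        intro x hx y hy
        funext δ
        have hx' := free_shift hx δ
        have hy' := free_shift hy δ
        have ex : π x δ = π (shiftAct δ x) 1 := by
          rw [hπequiv x hx δ]; show π x δ = π x (1 * δ); rw [one_mul]
        have ey : π y δ = π (shiftAct δ y) 1 := by
          rw [hπequiv y hy δ]; show π y δ = π y (1 * δ); rw [one_mul]
        rw [ex, ey]
        exact key _ hx' _ hy'
  · have hk1 : k = 1 := by omega
    subst hk1
    have hempty : freePart Γ (Fin 1) = ∅ := by
      ext x
      simp only [Set.mem_empty_iff_false, iff_false]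
      intro hx
      obtain ⟨γ, hγ⟩ := exists_ne (1 : Γ)
      exact hγ (hx γ (funext fun δ => Subsingleton.elim _ _))
    left
    constructor
    · intro x hx
      rw [hempty] at hx
      exact absurd hx (Set.notMem_empty x)
    · refine Set.eq_univ_of_forall fun γ x hx => ?_
      rw [hempty] at hx
      exact absurd hx (Set.notMem_empty x)
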